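/- Let ν be a Borel measure on Q = [-π/2, π/2]² with both coordinate marginals equal to λ and symmetric under (φ, φ⁺) ↦ (φ⁺, φ). For each n, partition Q into n² squares Q_{ij}^n = Θ_i^n × Θ_j^n. Then there exist rational nonnegative numbers c_{ij}^n with c_{ij}^n = c_{ji}^n, Σ_j c_{ij}^n = 2/n for every i, and n² · max_{i,j} |ν(Q_{ij}^n) − c_{ij}^n| → 0 as n → ∞. -/

import Mathlib

open Real MeasureTheory Set Filter Topology

noncomputable def lam : Measure ℝ :=
  (volume.restrict (Set.Icc (-(π/2)) (π/2))).withDensity fun φ => ENNReal.ofReal (Real.cos φ)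

noncomputable def Qsq (n i j : ℕ) : Set (ℝ × ℝ) :=
  Set.Icc (Real.arcsin (-1 + 2*((i:ℝ)-1)/n)) (Real.arcsin (-1 + 2*(i:ℝ)/n)) ×ˢ
  Set.Icc (Real.arcsin (-1 + 2*((j:ℝ)-1)/n)) (Real.arcsin (-1 + 2*(j:ℝ)/n))

lemma lam_Icc (c d : ℝ) (h1 : -(π/2) ≤ c) (h2 : d ≤ π/2) (hcd : c ≤ d) :
    lam (Set.Icc c d) = ENNReal.ofReal (Real.sin d - Real.sin c) := by
  have hsub : Set.Icc c d ⊆ Set.Icc (-(π/2)) (π/2) := Set.Icc_subset_Icc h1 h2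
  rw [lam, withDensity_apply _ measurableSet_Icc, Measure.restrict_restrict measurableSet_Icc,
    Set.inter_eq_self_of_subset_left hsub]
  rw [← ofReal_integral_eq_lintegral_ofReal]
  · congr 1
    rw [MeasureTheory.integral_Icc_eq_integral_Ioc, ← intervalIntegral.integral_of_le hcd,
      integral_cos]
  · exact (Real.continuous_cos.continuousOn).integrableOn_compact isCompact_Icc
  · filter_upwards [ae_restrict_mem measurableSet_Icc] with x hx
    exact Real.cos_nonneg_of_mem_Icc (hsub hx)

lemma sin_arcsin_clamp (x : ℝ) : Real.sin (Real.arcsin x) = max (-1) (min 1 x) := by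
  rcases le_total x (-1) with h | h
  · rw [Real.arcsin_of_le_neg_one h, ← Real.arcsin_neg_one,
      Real.sin_arcsin (by norm_num) (by norm_num)]
    rw [max_eq_left]
    exact le_trans (min_le_right _ _) h
  · rcases le_total 1 x with h' | h'
    · rw [Real.arcsin_of_one_le h', ← Real.arcsin_one,
        Real.sin_arcsin (by norm_num) (by norm_num)]
      rw [min_eq_left h', max_eq_right (by norm_num)]
    · rw [Real.sin_arcsin h h', min_eq_right h', max_eq_right h]

lemma clamp_lip {a b : ℝ} (hab : a ≤ b) :
    max (-1) (min 1 b) - max (-1) (min 1 a) ≤ b - a := by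
  simp only [max_def, min_def]; split_ifs <;> linarith

lemma lam_arcsin (a b : ℝ) (ha : -1 ≤ a) (hab : a ≤ b) (hb : b ≤ 1) :
    lam (Set.Icc (Real.arcsin a) (Real.arcsin b)) = ENNReal.ofReal (b - a) := by
  rw [lam_Icc _ _ (Real.neg_pi_div_two_le_arcsin a) (Real.arcsin_le_pi_div_two b)
      (Real.monotone_arcsin hab),
    Real.sin_arcsin ha (hab.trans hb), Real.sin_arcsin (ha.trans hab) hb]

lemma lam_arcsin_le (a b : ℝ) (hab : a ≤ b) :
    lam (Set.Icc (Real.arcsin a) (Real.arcsin b)) ≤ ENNReal.ofReal (b - a) := by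
  rw [lam_Icc _ _ (Real.neg_pi_div_two_le_arcsin a) (Real.arcsin_le_pi_div_two b)
      (Real.monotone_arcsin hab)]
  rw [sin_arcsin_clamp, sin_arcsin_clamp]
  exact ENNReal.ofReal_le_ofReal (clamp_lip hab)

lemma lam_singleton (x : ℝ) : lam {x} = 0 := by
  have : lam ≪ volume := by
    refine Measure.AbsolutelyContinuous.trans (withDensity_absolutelyContinuous _ _) ?_
    exact Measure.absolutelyContinuous_of_le Measure.restrict_le_self
  exact this (volume_singleton)

lemma lam_compl_Icc : lam ((Set.Icc (-(π/2)) (π/2))ᶜ) = 0 := by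
  rw [lam, withDensity_apply _ measurableSet_Icc.compl,
    Measure.restrict_restrict measurableSet_Icc.compl]
  simp

lemma lam_compl_Ico : lam ((Set.Ico (-(π/2)) (π/2))ᶜ) = 0 := by
  have : (Set.Ico (-(π/2)) (π/2))ᶜ ⊆ (Set.Icc (-(π/2)) (π/2))ᶜ ∪ {π/2} := by
    intro x hx
    simp only [Set.mem_compl_iff, Set.mem_Ico, not_and_or, not_le, not_lt] at hx
    rcases hx with h | h
    · exact Or.inl (by simp [Set.mem_Icc]; intro h'; linarith)
    · rcases eq_or_lt_of_le h with h' | h'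
      · exact Or.inr (by simp [h'.symm])
      · exact Or.inl (by simp [Set.mem_Icc]; intro h''; linarith)
  refine le_antisymm (le_trans (measure_mono this) ?_) (zero_le)
  refine le_trans (measure_union_le _ _) ?_
  rw [lam_compl_Icc, lam_singleton]; simp

lemma key_sum (ν : Measure (ℝ×ℝ)) (h2 : ν.map Prod.snd = lam) {n : ℕ} (hn : 0 < n)
    (S : Set ℝ) (hS : MeasurableSet S) :
    ∑ j ∈ Finset.Icc 1 n,
      ν (S ×ˢ Set.Icc (Real.arcsin (-1 + 2*((j:ℝ)-1)/n)) (Real.arcsin (-1 + 2*(j:ℝ)/n)))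
      = ν (S ×ˢ (Set.univ : Set ℝ)) := by
  set g : ℕ → ℝ := fun k => Real.arcsin (-1 + 2*(k:ℝ)/n) with hgdef
  have hg : Monotone g := by
    intro k l h
    refine Real.monotone_arcsin ?_
    have : (k:ℝ) ≤ (l:ℝ) := by exact_mod_cast h
    gcongr
  have hline : ∀ x : ℝ, ν (Prod.snd ⁻¹' {x}) = 0 := by
    intro x
    rw [← Measure.map_apply measurable_snd (measurableSet_singleton x), h2, lam_singleton]
  have hIccIco : ∀ a b : ℝ, ν (S ×ˢ Set.Icc a b) = ν (S ×ˢ Set.Ico a b) := by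
    intro a b
    refine le_antisymm ?_ (measure_mono (Set.prod_mono subset_rfl Set.Ico_subset_Icc_self))
    have hsub : S ×ˢ Set.Icc a b ⊆ S ×ˢ Set.Ico a b ∪ Prod.snd ⁻¹' {b} := by
      rintro ⟨x, y⟩ ⟨hx, hy1, hy2⟩
      rcases lt_or_eq_of_le hy2 with h | h
      · exact Or.inl ⟨hx, hy1, h⟩
      · exact Or.inr h
    calc ν (S ×ˢ Set.Icc a b) ≤ ν (S ×ˢ Set.Ico a b ∪ Prod.snd ⁻¹' {b}) := measure_mono hsub
      _ ≤ ν (S ×ˢ Set.Ico a b) + ν (Prod.snd ⁻¹' {b}) := measure_union_le _ _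
      _ = ν (S ×ˢ Set.Ico a b) := by rw [hline]; simp
  have tele : ∀ m : ℕ, (⋃ j ∈ Finset.Icc 1 m, Set.Ico (g (j-1)) (g j)) = Set.Ico (g 0) (g m) := by
    intro m
    induction m with
    | zero => simp
    | succ m ih =>
      rw [← Finset.insert_Icc_right_eq_Icc_add_one (by omega : 1 ≤ m + 1)]
      rw [Finset.set_biUnion_insert _ _, ih]
      simp only [Nat.add_sub_cancel]
      rw [Set.union_comm]; exact Set.Ico_union_Ico_eq_Ico (hg (Nat.zero_le m)) (hg (Nat.le_succ m))
  have hdis : ∀ j k : ℕ, j < k →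
      Disjoint (Set.Ico (g (j-1)) (g j)) (Set.Ico (g (k-1)) (g k)) := by
    intro j k hjk
    rw [Set.Ico_disjoint_Ico]
    exact le_trans (min_le_left _ _) (le_trans (hg (by omega : j ≤ k - 1)) (le_max_right _ _))
  have hrw : ∀ j ∈ Finset.Icc 1 n,
      ν (S ×ˢ Set.Icc (Real.arcsin (-1 + 2*((j:ℝ)-1)/n)) (Real.arcsin (-1 + 2*(j:ℝ)/n)))
        = ν (S ×ˢ Set.Ico (g (j-1)) (g j)) := by
    intro j hj
    rw [Finset.mem_Icc] at hj
    have : ((j:ℝ) - 1) = ((j - 1 : ℕ) : ℝ) := by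
      rw [Nat.cast_pred (by omega)]
    rw [this, ← hIccIco]
  rw [Finset.sum_congr rfl hrw]
  rw [← measure_biUnion_finset ?_ (fun j _ => hS.prod measurableSet_Ico)]
  · have : (⋃ j ∈ Finset.Icc 1 n, S ×ˢ Set.Ico (g (j-1)) (g j)) = S ×ˢ Set.Ico (g 0) (g n) := by
      rw [← tele n]
      ext ⟨x, y⟩
      simp only [Set.mem_iUnion, Set.mem_prod, Set.mem_iUnion]
      tauto
    rw [this]
    have hg0 : g 0 = -(π/2) := by simp [hgdef, Real.arcsin_neg_one]
    have hgn : g n = π/2 := by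
      have hn' : (n:ℝ) ≠ 0 := Nat.cast_ne_zero.mpr hn.ne'
      have : (-1 : ℝ) + 2*(n:ℝ)/n = 1 := by
        rw [mul_div_assoc, div_self hn']; norm_num
      simp [hgdef, this, Real.arcsin_one]
    rw [hg0, hgn]
    refine le_antisymm (measure_mono (Set.prod_mono subset_rfl (Set.subset_univ _))) ?_
    have hsub : S ×ˢ (Set.univ : Set ℝ) ⊆
        S ×ˢ Set.Ico (-(π/2)) (π/2) ∪ Prod.snd ⁻¹' (Set.Ico (-(π/2)) (π/2))ᶜ := by
      rintro ⟨x, y⟩ ⟨hx, -⟩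
      by_cases hy : y ∈ Set.Ico (-(π/2)) (π/2)
      · exact Or.inl ⟨hx, hy⟩
      · exact Or.inr hy
    calc ν (S ×ˢ (Set.univ : Set ℝ))
        ≤ ν (S ×ˢ Set.Ico (-(π/2)) (π/2) ∪ Prod.snd ⁻¹' (Set.Ico (-(π/2)) (π/2))ᶜ) :=
          measure_mono hsub
      _ ≤ ν (S ×ˢ Set.Ico (-(π/2)) (π/2)) + ν (Prod.snd ⁻¹' (Set.Ico (-(π/2)) (π/2))ᶜ) :=
          measure_union_le _ _
      _ = ν (S ×ˢ Set.Ico (-(π/2)) (π/2)) := by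
          rw [← Measure.map_apply measurable_snd measurableSet_Ico.compl, h2, lam_compl_Ico]
          simp
  · intro j hj k hk hjk
    rcases lt_or_gt_of_ne hjk with h | h
    · exact Set.disjoint_left.mpr (fun ⟨x,y⟩ ⟨_, hy1⟩ ⟨_, hy2⟩ =>
        Set.disjoint_left.mp (hdis j k h) hy1 hy2)
    · exact Set.disjoint_left.mpr (fun ⟨x,y⟩ ⟨_, hy1⟩ ⟨_, hy2⟩ =>
        Set.disjoint_left.mp ((hdis k j h).symm) hy1 hy2)

lemma Qsq_rowsum (ν : Measure (ℝ×ℝ)) (h1 : ν.map Prod.fst = lam) (h2 : ν.map Prod.snd = lam)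
    {n : ℕ} (hn : 0 < n) (i : ℕ) :
    ∑ j ∈ Finset.Icc 1 n, ν (Qsq n i j)
      = lam (Set.Icc (Real.arcsin (-1 + 2*((i:ℝ)-1)/n)) (Real.arcsin (-1 + 2*(i:ℝ)/n))) := by
  have := key_sum ν h2 hn
    (Set.Icc (Real.arcsin (-1 + 2*((i:ℝ)-1)/n)) (Real.arcsin (-1 + 2*(i:ℝ)/n)))
    measurableSet_Icc
  simp only [Qsq]
  rw [this, Set.prod_univ, ← Measure.map_apply measurable_fst measurableSet_Icc, h1]

lemma Asum_eq (ν : Measure (ℝ×ℝ)) [IsFiniteMeasure ν]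
    (h1 : ν.map Prod.fst = lam) (h2 : ν.map Prod.snd = lam)
    {n i : ℕ} (hn : 0 < n) (hi1 : 1 ≤ i) (hi2 : i ≤ n) :
    ∑ j ∈ Finset.Icc 1 n, (ν (Qsq n i j)).toReal = 2/(n:ℝ) := by
  have hn' : (0:ℝ) < n := Nat.cast_pos.mpr hn
  have hi1' : (1:ℝ) ≤ i := by exact_mod_cast hi1
  have hi2' : (i:ℝ) ≤ n := by exact_mod_cast hi2
  rw [← ENNReal.toReal_sum (fun j _ => measure_ne_top ν _), Qsq_rowsum ν h1 h2 hn i]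
  rw [lam_arcsin _ _ ?_ ?_ ?_]
  · have heq : (-1 + 2*(i:ℝ)/n) - (-1 + 2*((i:ℝ)-1)/n) = 2/(n:ℝ) := by field_simp; ring
    rw [heq, ENNReal.toReal_ofReal (by positivity)]
  · have : (0:ℝ) ≤ 2*((i:ℝ)-1)/n := div_nonneg (by linarith) hn'.le
    linarith
  · have : ((i:ℝ)-1) ≤ (i:ℝ) := by linarith
    have h2' : 2*((i:ℝ)-1)/n ≤ 2*(i:ℝ)/n := by gcongr
    linarith
  · have : 2*(i:ℝ)/n ≤ 2 := by
      rw [div_le_iff₀ hn']; linarith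
    linarith

lemma Asum_le (ν : Measure (ℝ×ℝ)) [IsFiniteMeasure ν]
    (h1 : ν.map Prod.fst = lam) (h2 : ν.map Prod.snd = lam)
    {n : ℕ} (hn : 0 < n) (i : ℕ) :
    ∑ j ∈ Finset.Icc 1 n, (ν (Qsq n i j)).toReal ≤ 2/(n:ℝ) := by
  have hn' : (0:ℝ) < n := Nat.cast_pos.mpr hn
  rw [← ENNReal.toReal_sum (fun j _ => measure_ne_top ν _), Qsq_rowsum ν h1 h2 hn i]
  have hab : (-1 + 2*((i:ℝ)-1)/n) ≤ (-1 + 2*(i:ℝ)/n) := by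
    have : ((i:ℝ)-1) ≤ (i:ℝ) := by linarith
    have h2' : 2*((i:ℝ)-1)/n ≤ 2*(i:ℝ)/n := by gcongr
    linarith
  have := lam_arcsin_le _ _ hab
  have heq : (-1 + 2*(i:ℝ)/n) - (-1 + 2*((i:ℝ)-1)/n) = 2/(n:ℝ) := by
    field_simp; ring
  rw [heq] at this
  calc (lam _).toReal ≤ (ENNReal.ofReal (2/(n:ℝ))).toReal :=
        ENNReal.toReal_mono ENNReal.ofReal_ne_top this
    _ = 2/(n:ℝ) := ENNReal.toReal_ofReal (by positivity)

theorem stmt9 (ν : Measure (ℝ × ℝ)) [IsFiniteMeasure ν]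
    (h1 : ν.map Prod.fst = lam) (h2 : ν.map Prod.snd = lam)
    (hswap : ν.map Prod.swap = ν) :
    ∃ c : ℕ → ℕ → ℕ → ℚ,
      (∀ n i j, 0 ≤ c n i j) ∧
      (∀ n i j, c n i j = c n j i) ∧
      (∀ n, 0 < n → ∀ i, 1 ≤ i → i ≤ n → ∑ j ∈ Finset.Icc 1 n, c n i j = 2/(n:ℚ)) ∧
      (∀ ε > (0:ℝ), ∃ N : ℕ, ∀ n : ℕ, N ≤ n → ∀ i j : ℕ, 1 ≤ i → i ≤ n → 1 ≤ j → j ≤ n →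
        (n:ℝ)^2 * |(ν (Qsq n i j)).toReal - ((c n i j : ℚ) : ℝ)| < ε) := by
  classical
  -- abbreviation
  set A : ℕ → ℕ → ℕ → ℝ := fun n i j => (ν (Qsq n i j)).toReal with hAdef
  have hA0 : ∀ n i j, 0 ≤ A n i j := fun n i j => ENNReal.toReal_nonneg
  have hQmeas : ∀ n i j, MeasurableSet (Qsq n i j) :=
    fun n i j => measurableSet_Icc.prod measurableSet_Icc
  have hAsymm : ∀ n i j, A n i j = A n j i := by
    intro n i j
    have : ν (Qsq n i j) = ν (Qsq n j i) := by
      conv_lhs => rw [← hswap]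
      rw [Measure.map_apply measurable_swap (hQmeas n i j)]
      congr 1
      rw [Qsq, Set.preimage_swap_prod]
      rfl
    simp only [hAdef, this]
  -- choice of rational approximations
  set δ : ℕ → ℝ := fun n => 1/((n:ℝ)+1)^4 with hδdef
  have hδpos : ∀ n, 0 < δ n := by
    intro n; simp only [hδdef]; positivity
  have hex : ∀ n i j, ∃ q : ℚ, 0 ≤ q ∧ (q:ℝ) ≤ A n i j ∧ A n i j - (q:ℝ) ≤ δ n := by
    intro n i j
    rcases eq_or_lt_of_le (hA0 n i j) with h | h
    · exact ⟨0, le_refl _, by rw [← h]; norm_num, by rw [← h]; norm_num; exact (hδpos n).le⟩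
    · obtain ⟨q, hq1, hq2⟩ := exists_rat_btwn (show max (A n i j - δ n) 0 < A n i j from
        max_lt (by linarith [hδpos n]) h)
      refine ⟨q, ?_, hq2.le, ?_⟩
      · have : (0:ℝ) ≤ q := le_trans (le_max_right _ _) hq1.le
        exact_mod_cast this
      · have : A n i j - δ n ≤ q := le_trans (le_max_left _ _) hq1.le
        linarith
  choose q hq0 hq1 hq2 using hex
  set qs : ℕ → ℕ → ℕ → ℚ := fun n i j => q n (min i j) (max i j) with hqsdef
  have hqs_symm : ∀ n i j, qs n i j = qs n j i := by
    intro n i j; simp only [hqsdef, min_comm, max_comm]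
  have hAminmax : ∀ n i j, A n (min i j) (max i j) = A n i j := by
    intro n i j
    rcases le_total i j with h | h
    · rw [min_eq_left h, max_eq_right h]
    · rw [min_eq_right h, max_eq_left h]; exact hAsymm n j i
  have hqs0 : ∀ n i j, 0 ≤ qs n i j := fun n i j => hq0 n _ _
  have hqs1 : ∀ n i j, (qs n i j : ℝ) ≤ A n i j := by
    intro n i j; rw [← hAminmax n i j]; exact hq1 n _ _
  have hqs2 : ∀ n i j, A n i j - (qs n i j : ℝ) ≤ δ n := by
    intro n i j; rw [← hAminmax n i j]; exact hq2 n _ _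
  refine ⟨fun n i j => if i = j then 2/(n:ℚ) - ∑ k ∈ (Finset.Icc 1 n).erase i, qs n i k
      else qs n i j, ?_, ?_, ?_, ?_⟩
  · -- nonnegativity
    intro n i j
    beta_reduce
    by_cases hij : i = j
    · rw [if_pos hij]
      rcases Nat.eq_zero_or_pos n with hn | hn
      · subst hn
        rw [show Finset.Icc 1 0 = ∅ from Finset.Icc_eq_empty (by omega)]
        simp
      · have key : ((∑ k ∈ (Finset.Icc 1 n).erase i, qs n i k : ℚ) : ℝ) ≤ ((2/(n:ℚ) : ℚ) : ℝ) := by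
          push_cast
          calc ∑ k ∈ (Finset.Icc 1 n).erase i, ((qs n i k : ℚ) : ℝ)
              ≤ ∑ k ∈ (Finset.Icc 1 n).erase i, A n i k :=
                Finset.sum_le_sum (fun k _ => hqs1 n i k)
            _ ≤ ∑ k ∈ Finset.Icc 1 n, A n i k :=
                Finset.sum_le_sum_of_subset_of_nonneg (Finset.erase_subset _ _)
                  (fun k _ _ => hA0 n i k)
            _ ≤ 2/(n:ℝ) := Asum_le ν h1 h2 hn i
        have : (∑ k ∈ (Finset.Icc 1 n).erase i, qs n i k : ℚ) ≤ 2/(n:ℚ) := by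
          exact_mod_cast key
        linarith
    · rw [if_neg hij]; exact hqs0 n i j
  · -- symmetry
    intro n i j
    beta_reduce
    by_cases hij : i = j
    · subst hij; rfl
    · rw [if_neg hij, if_neg (Ne.symm hij), hqs_symm]
  · -- row sums
    intro n hn i hi1 hi2
    have hi : i ∈ Finset.Icc 1 n := Finset.mem_Icc.mpr ⟨hi1, hi2⟩
    beta_reduce
    rw [← Finset.add_sum_erase _ _ hi, if_pos rfl]
    rw [Finset.sum_congr rfl (fun j hj => if_neg (Ne.symm (Finset.ne_of_mem_erase hj)))]
    ring
  · -- the limit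
    intro ε hε
    refine ⟨⌈1/ε⌉₊ + 1, fun n hn i j hi1 hi2 hj1 hj2 => ?_⟩
    beta_reduce
    have hn1 : 1 ≤ n := by omega
    have hnpos : 0 < n := hn1
    have hn' : (1:ℝ) ≤ n := by exact_mod_cast hn1
    have hNε : 1/ε ≤ (n:ℝ) := by
      calc 1/ε ≤ (⌈1/ε⌉₊ : ℝ) := Nat.le_ceil _
        _ ≤ n := by exact_mod_cast (by omega : ⌈1/ε⌉₊ ≤ n)
    -- main estimate: |A - c| ≤ n * δ n
    have hest : |A n i j - ((if i = j then 2/(n:ℚ) - ∑ k ∈ (Finset.Icc 1 n).erase i, qs n i k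
        else qs n i j : ℚ) : ℝ)| ≤ (n:ℝ) * δ n := by
      by_cases hij : i = j
      · rw [if_pos hij]
        subst hij
        have hrow : A n i i + ∑ k ∈ (Finset.Icc 1 n).erase i, A n i k = 2/(n:ℝ) := by
          rw [Finset.add_sum_erase _ _ (Finset.mem_Icc.mpr ⟨hi1, hi2⟩)]
          exact Asum_eq ν h1 h2 hnpos hi1 hi2
        have hcast : (((2/(n:ℚ) - ∑ k ∈ (Finset.Icc 1 n).erase i, qs n i k : ℚ)) : ℝ)
            = 2/(n:ℝ) - ∑ k ∈ (Finset.Icc 1 n).erase i, ((qs n i k : ℚ) : ℝ) := by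
          push_cast; ring
        rw [hcast]
        have hdiff : A n i i - (2/(n:ℝ) - ∑ k ∈ (Finset.Icc 1 n).erase i, ((qs n i k : ℚ) : ℝ))
            = -(∑ k ∈ (Finset.Icc 1 n).erase i, (A n i k - ((qs n i k : ℚ) : ℝ))) := by
          rw [Finset.sum_sub_distrib]
          linarith
        rw [hdiff, abs_neg]
        have hsum_nonneg : 0 ≤ ∑ k ∈ (Finset.Icc 1 n).erase i, (A n i k - ((qs n i k : ℚ) : ℝ)) :=
          Finset.sum_nonneg (fun k _ => by linarith [hqs1 n i k])
        rw [abs_of_nonneg hsum_nonneg]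
        calc ∑ k ∈ (Finset.Icc 1 n).erase i, (A n i k - ((qs n i k : ℚ) : ℝ))
            ≤ ∑ k ∈ (Finset.Icc 1 n).erase i, δ n :=
              Finset.sum_le_sum (fun k _ => hqs2 n i k)
          _ = ((Finset.Icc 1 n).erase i).card * δ n := by rw [Finset.sum_const, nsmul_eq_mul]
          _ ≤ (n:ℝ) * δ n := by
              have hcard : ((Finset.Icc 1 n).erase i).card ≤ n := by
                calc ((Finset.Icc 1 n).erase i).card ≤ (Finset.Icc 1 n).card :=
                      Finset.card_erase_le
                  _ = n := by rw [Nat.card_Icc]; omega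
              have : (((Finset.Icc 1 n).erase i).card : ℝ) ≤ (n:ℝ) := by exact_mod_cast hcard
              exact mul_le_mul_of_nonneg_right this (hδpos n).le
      · rw [if_neg hij]
        rw [abs_of_nonneg (by linarith [hqs1 n i j])]
        calc A n i j - ((qs n i j : ℚ) : ℝ) ≤ δ n := hqs2 n i j
          _ ≤ (n:ℝ) * δ n := le_mul_of_one_le_left (hδpos n).le hn'
    calc (n:ℝ)^2 * |A n i j - _| ≤ (n:ℝ)^2 * ((n:ℝ) * δ n) := by
          exact mul_le_mul_of_nonneg_left hest (by positivity)
      _ = (n:ℝ)^3 / ((n:ℝ)+1)^4 := by rw [hδdef]; ring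
      _ < 1/((n:ℝ)+1) := by
          rw [div_lt_div_iff₀ (by positivity) (by positivity)]
          have hx : (0:ℝ) ≤ n := Nat.cast_nonneg n
          nlinarith [hx, mul_nonneg (mul_nonneg hx hx) hx, mul_nonneg hx hx]
      _ < ε := by
          rw [div_lt_iff₀ (by positivity)]
          rw [div_le_iff₀ hε] at hNε
          nlinarith
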